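/- arXiv:2306.10631 — 3 statements merged into one kernel-verified Lean document; each statement's English description precedes it below -/
import Mathlib

section
/- Let k ≥ 1 and let G be a finite (s,k)-edge-connected graph with deg(s) ≤ 3 and at least two vertices other than s. Then for any two vertices x, y different from s, at most one of any collection of k pairwise edge-disjoint x–y paths in G passes through s; consequently the graph G − s is (k−1)-edge-connected. -/
universe u v

/-- A loopless multigraph on vertex type `V` with edge type `E`:
each edge `e` has two distinct endpoints `fst e` and `snd e`. -/
structure Multigraph (V : Type u) (E : Type v) where
  fst : E → V
  snd : E → V
  loopless : ∀ e, fst e ≠ snd e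

namespace Multigraph

variable {V : Type u} {E : Type v}

/-- The edge `e` has endpoints `a` and `b`. -/
def Inc (G : Multigraph V E) (e : E) (a b : V) : Prop :=
  (G.fst e = a ∧ G.snd e = b) ∨ (G.fst e = b ∧ G.snd e = a)

/-- The edge `e` is incident with the vertex `s`. -/
def IncVert (G : Multigraph V E) (s : V) (e : E) : Prop :=
  G.fst e = s ∨ G.snd e = s

/-- The degree of a vertex: the number of edges incident with it. -/
noncomputable def degree (G : Multigraph V E) (s : V) : ℕ :=
  {e : E | G.IncVert s e}.ncard

/-- A graph is locally finite if every vertex is incident with only finitely many edges. -/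
def LocallyFinite (G : Multigraph V E) : Prop :=
  ∀ s : V, {e : E | G.IncVert s e}.Finite

/-- `δ(S)`: the set of edges with exactly one endpoint in `S`. -/
def edgeCut (G : Multigraph V E) (S : Set V) : Set E :=
  {e : E | (G.fst e ∈ S ∧ G.snd e ∉ S) ∨ (G.fst e ∉ S ∧ G.snd e ∈ S)}

open Classical in
/-- The endpoint of `e` other than `s` (for `e` incident with `s`). -/
noncomputable def other (G : Multigraph V E) (s : V) (e : E) : V :=
  if G.fst e = s then G.snd e else G.fst e

open Classical in
/-- For an edge of `δ(S)`, its endpoint outside `S`. -/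
noncomputable def outEnd (G : Multigraph V E) (S : Set V) (e : E) : V :=
  if G.fst e ∈ S then G.snd e else G.fst e

/-- Walks in a multigraph. -/
inductive Walk (G : Multigraph V E) : V → V → Type (max u v)
  | nil (x : V) : Walk G x x
  | cons {x y z : V} (e : E) (h : G.Inc e x y) (p : Walk G y z) : Walk G x z

namespace Walk

variable {G : Multigraph V E}

/-- The list of edges used by a walk. -/
def edges : ∀ {x y : V}, G.Walk x y → List E
  | _, _, .nil _ => []
  | _, _, .cons e _ p => e :: edges p

/-- The list of vertices visited by a walk. -/
def support : ∀ {x y : V}, G.Walk x y → List V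
  | _, y, .nil _ => [y]
  | x, _, .cons _ _ p => x :: support p

/-- A walk is a path if it has no repeated vertices. -/
def IsPath {x y : V} (p : G.Walk x y) : Prop := p.support.Nodup

end Walk

/-- There are `k` pairwise edge-disjoint paths from `x` to `y`. -/
def EdgeDisjointPaths (G : Multigraph V E) (k : ℕ) (x y : V) : Prop :=
  ∃ P : Fin k → G.Walk x y,
    (∀ i, (P i).IsPath) ∧ ∀ i j, i ≠ j → List.Disjoint (P i).edges (P j).edges

/-- `G` is `k`-edge-connected: between any two distinct vertices there are `k`
pairwise edge-disjoint paths. -/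
def EdgeConnected (G : Multigraph V E) (k : ℕ) : Prop :=
  ∀ x y : V, x ≠ y → G.EdgeDisjointPaths k x y

/-- `G` is `(s,k)`-edge-connected: between any two distinct vertices different from `s`
there are `k` pairwise edge-disjoint paths (possibly through `s`). -/
def SEdgeConnected (G : Multigraph V E) (s : V) (k : ℕ) : Prop :=
  ∀ x y : V, x ≠ s → y ≠ s → x ≠ y → G.EdgeDisjointPaths k x y

/-- An orientation of `G` assigns to each edge a tail and a head (its two endpoints). -/
structure Orientation (G : Multigraph V E) where
  tail : E → V
  head : E → V
  inc : ∀ e, G.Inc e (tail e) (head e)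

namespace Orientation

variable {G : Multigraph V E}

/-- Directed walks with respect to an orientation. -/
inductive DiWalk (o : G.Orientation) : V → V → Type (max u v)
  | nil (x : V) : DiWalk o x x
  | cons {x y z : V} (e : E) (ht : o.tail e = x) (hh : o.head e = y) (p : DiWalk o y z) :
      DiWalk o x z

namespace DiWalk

variable {o : G.Orientation}

/-- The list of arcs used by a directed walk. -/
def edges : ∀ {x y : V}, o.DiWalk x y → List E
  | _, _, .nil _ => []
  | _, _, .cons e _ _ p => e :: edges p

/-- The list of vertices visited by a directed walk. -/
def support : ∀ {x y : V}, o.DiWalk x y → List V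
  | _, y, .nil _ => [y]
  | x, _, .cons _ _ _ p => x :: support p

/-- A directed walk is a directed path if it has no repeated vertices. -/
def IsPath {x y : V} (p : o.DiWalk x y) : Prop := p.support.Nodup

end DiWalk

/-- An orientation is `k`-arc-connected if from any vertex to any other there are `k`
pairwise arc-disjoint directed paths. -/
def ArcConnected (o : G.Orientation) (k : ℕ) : Prop :=
  ∀ x y : V, ∃ P : Fin k → o.DiWalk x y,
    (∀ i, (P i).IsPath) ∧ ∀ i j, i ≠ j → List.Disjoint (P i).edges (P j).edges

end Orientation

/-- A ray: a one-way infinite path. -/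
structure Ray (G : Multigraph V E) where
  vert : ℕ → V
  edge : ℕ → E
  inc : ∀ n, G.Inc (edge n) (vert n) (vert (n + 1))
  inj : Function.Injective vert

/-- Two rays are edge-disjoint. -/
def Ray.EdgeDisjoint {G : Multigraph V E} (R R' : G.Ray) : Prop :=
  ∀ m n, R.edge m ≠ R'.edge n

/-- A walk is edge-disjoint from a ray. -/
def Walk.EdgeDisjointRay {G : Multigraph V E} {x y : V} (p : G.Walk x y) (R : G.Ray) : Prop :=
  ∀ e ∈ p.edges, ∀ n, R.edge n ≠ e

/-- Two rays are equivalent (belong to the same end) if there are infinitely many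
pairwise vertex-disjoint paths between them. -/
def RayEquiv (G : Multigraph V E) (R R' : G.Ray) : Prop :=
  ∃ P : ℕ → (Σ (m n : ℕ), G.Walk (R.vert m) (R'.vert n)),
    (∀ i, (P i).2.2.IsPath) ∧
      ∀ i j, i ≠ j → List.Disjoint (P i).2.2.support (P j).2.2.support

/-- A graph is one-ended if it has a ray and any two rays are equivalent. -/
def OneEnded (G : Multigraph V E) : Prop :=
  Nonempty G.Ray ∧ ∀ R R' : G.Ray, G.RayEquiv R R'

end Multigraph
namespace Multigraph

/-- The graph `G − S` obtained by deleting the vertices of `S` (and all incident edges). -/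
def deleteVerts {V : Type u} {E : Type v} (G : Multigraph V E) (S : Set V) :
    Multigraph {x : V // x ∉ S} {e : E // G.fst e ∉ S ∧ G.snd e ∉ S} where
  fst e := ⟨G.fst e.1, e.2.1⟩
  snd e := ⟨G.snd e.1, e.2.2⟩
  loopless e h := G.loopless e.1 (congrArg Subtype.val h)

end Multigraph

namespace Multigraph

variable {V : Type u} {E : Type v} {G : Multigraph V E}

lemma aux_start_mem_support : ∀ {x y : V} (p : G.Walk x y), x ∈ p.support
  | _, _, .nil x => List.mem_singleton_self x
  | _, _, .cons _ _ p => List.mem_cons_self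

/-- A path through `s` with both endpoints different from `s` uses two distinct
edges incident with `s`. -/
lemma aux_two_edges {s : V} : ∀ {x y : V} (p : G.Walk x y), p.IsPath → x ≠ s → y ≠ s →
    s ∈ p.support →
    ∃ e₁ ∈ p.edges, ∃ e₂ ∈ p.edges, e₁ ≠ e₂ ∧ G.IncVert s e₁ ∧ G.IncVert s e₂ := by
  intro x y p
  induction p with
  | nil x =>
    intro _ _ hy hs
    exact absurd (List.mem_singleton.mp hs) (Ne.symm hy)
  | @cons x y' z e h q ih =>
    intro hpath hx hz hs
    have hs' : s ∈ q.support := by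
      rcases List.mem_cons.mp hs with h1 | h1
      · exact absurd h1.symm hx
      · exact h1
    by_cases hy : y' = s
    · subst hy
      cases q with
      | nil => exact absurd rfl hz
      | @cons _ w _ e' h' q' =>
        have hxw : x ≠ w := by
          intro hxw
          have hnd := (List.nodup_cons.mp hpath).1
          exact hnd (List.mem_cons_of_mem _ (hxw ▸ aux_start_mem_support q'))
        refine ⟨e, List.mem_cons_self, e', List.mem_cons_of_mem _ List.mem_cons_self,
          ?_, ?_, ?_⟩
        · intro heq
          subst heq
          rcases h with ⟨h1, h2⟩ | ⟨h1, h2⟩ <;> rcases h' with ⟨h3, h4⟩ | ⟨h3, h4⟩ <;>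
            first
            | exact hx (h1.symm.trans h3)
            | exact hxw (h1.symm.trans h4)
            | exact hxw (h2.symm.trans h4)
            | exact hx (h2.symm.trans h4)
            | exact hxw (h1.symm.trans h3)
        · rcases h with ⟨h1, h2⟩ | ⟨h1, h2⟩
          · exact Or.inr h2
          · exact Or.inl h1
        · rcases h' with ⟨h1, h2⟩ | ⟨h1, h2⟩
          · exact Or.inl h1
          · exact Or.inr h2
    · obtain ⟨e₁, he₁, e₂, he₂, hne, hi1, hi2⟩ :=
        ih (List.nodup_cons.mp hpath).2 hy hz hs'
      exact ⟨e₁, List.mem_cons_of_mem _ he₁, e₂, List.mem_cons_of_mem _ he₂, hne, hi1, hi2⟩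

/-- A walk avoiding `s` lifts to a walk in `G − s`. -/
lemma aux_lift_walk {s : V} : ∀ {a b : V} (p : G.Walk a b) (ha : a ∉ ({s} : Set V))
    (hb : b ∉ ({s} : Set V)), s ∉ p.support →
    ∃ q : (G.deleteVerts {s}).Walk ⟨a, ha⟩ ⟨b, hb⟩,
      q.edges.map Subtype.val = p.edges ∧ q.support.map Subtype.val = p.support := by
  intro a b p
  induction p with
  | nil x =>
    intro ha hb _
    refine ⟨Multigraph.Walk.nil (G := G.deleteVerts {s}) ⟨x, ha⟩, ?_, ?_⟩ <;> rfl
  | @cons x y z e h q ih =>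
    intro ha hb hs
    have hsq : s ∉ q.support := fun hmem => hs (List.mem_cons_of_mem _ hmem)
    have hy : y ∉ ({s} : Set V) := by
      intro hy
      exact hsq ((Set.mem_singleton_iff.mp hy) ▸ aux_start_mem_support q)
    have hfst : G.fst e ∉ ({s} : Set V) := by
      rcases h with ⟨h1, _⟩ | ⟨h1, _⟩
      · exact h1 ▸ ha
      · exact h1 ▸ hy
    have hsnd : G.snd e ∉ ({s} : Set V) := by
      rcases h with ⟨_, h2⟩ | ⟨_, h2⟩
      · exact h2 ▸ hy
      · exact h2 ▸ ha
    have hinc : (G.deleteVerts {s}).Inc ⟨e, hfst, hsnd⟩ ⟨x, ha⟩ ⟨y, hy⟩ := by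
      rcases h with ⟨h1, h2⟩ | ⟨h1, h2⟩
      · exact Or.inl ⟨Subtype.ext h1, Subtype.ext h2⟩
      · exact Or.inr ⟨Subtype.ext h1, Subtype.ext h2⟩
    obtain ⟨q', hq'e, hq's⟩ := ih hy hb hsq
    exact ⟨.cons ⟨e, hfst, hsnd⟩ hinc q',
      by simp [Walk.edges, hq'e], by simp [Walk.support, hq's]⟩

end Multigraph

/-- Let `k ≥ 1` and let `G` be a finite `(s,k)`-edge-connected graph
with `deg(s) ≤ 3` and at least two vertices other than `s`. Then for any two vertices
`x, y` different from `s`, at most one of any collection of `k` pairwise edge-disjoint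
`x`–`y` paths in `G` passes through `s`; consequently the graph `G − s` is
`(k−1)`-edge-connected. -/
theorem delete_vertex_edgeConnected {V : Type u} {E : Type v} [Finite V] [Finite E]
    (G : Multigraph V E) (s : V) (k : ℕ) (hk : 1 ≤ k) (hconn : G.SEdgeConnected s k)
    (hdeg : G.degree s ≤ 3) (hcard : ∃ x y : V, x ≠ s ∧ y ≠ s ∧ x ≠ y) :
    (∀ x y : V, x ≠ s → y ≠ s → x ≠ y → ∀ P : Fin k → G.Walk x y,
      (∀ i, (P i).IsPath) → (∀ i j, i ≠ j → List.Disjoint (P i).edges (P j).edges) →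
      ∀ i j, s ∈ (P i).support → s ∈ (P j).support → i = j) ∧
    (G.deleteVerts {s}).EdgeConnected (k - 1) := by
  have part1 : ∀ x y : V, x ≠ s → y ≠ s → x ≠ y → ∀ P : Fin k → G.Walk x y,
      (∀ i, (P i).IsPath) → (∀ i j, i ≠ j → List.Disjoint (P i).edges (P j).edges) →
      ∀ i j, s ∈ (P i).support → s ∈ (P j).support → i = j := by
    intro x y hx hy hxy P hpath hdisj i j hi hj
    by_contra hne
    obtain ⟨e₁, he₁, e₂, he₂, h12, hi1, hi2⟩ :=
      Multigraph.aux_two_edges (P i) (hpath i) hx hy hi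
    obtain ⟨e₃, he₃, e₄, he₄, h34, hi3, hi4⟩ :=
      Multigraph.aux_two_edges (P j) (hpath j) hx hy hj
    have hd := hdisj i j hne
    have h13 : e₁ ≠ e₃ := fun h => hd he₁ (h ▸ he₃)
    have h14 : e₁ ≠ e₄ := fun h => hd he₁ (h ▸ he₄)
    have h23 : e₂ ≠ e₃ := fun h => hd he₂ (h ▸ he₃)
    have h24 : e₂ ≠ e₄ := fun h => hd he₂ (h ▸ he₄)
    have hsub : ({e₁, e₂, e₃, e₄} : Set E) ⊆ {e | G.IncVert s e} := by
      intro e he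
      rcases he with rfl | rfl | rfl | rfl
      · exact hi1
      · exact hi2
      · exact hi3
      · exact hi4
    have h4 : ({e₁, e₂, e₃, e₄} : Set E).ncard = 4 := by
      rw [Set.ncard_insert_of_notMem (by simp [h12, h13, h14]),
        Set.ncard_insert_of_notMem (by simp [h23, h24]), Set.ncard_pair h34]
    have hle : ({e₁, e₂, e₃, e₄} : Set E).ncard ≤ {e | G.IncVert s e}.ncard :=
      Set.ncard_le_ncard hsub (Set.toFinite _)
    have hdeg' : {e | G.IncVert s e}.ncard ≤ 3 := hdeg
    omega
  refine ⟨part1, ?_⟩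
  obtain ⟨k', rfl⟩ : ∃ k', k = k' + 1 := ⟨k - 1, (Nat.succ_pred_eq_of_pos hk).symm⟩
  intro x y hxy
  have hx : x.1 ≠ s := fun h => x.2 (Set.mem_singleton_iff.mpr h)
  have hy : y.1 ≠ s := fun h => y.2 (Set.mem_singleton_iff.mpr h)
  have hxy' : x.1 ≠ y.1 := fun h => hxy (Subtype.ext h)
  obtain ⟨P, hpath, hdisj⟩ := hconn x.1 y.1 hx hy hxy'
  have hex : ∃ i₀ : Fin (k' + 1), ∀ j, s ∈ (P j).support → j = i₀ := by
    by_cases h : ∃ i, s ∈ (P i).support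
    · obtain ⟨i₀, hi₀⟩ := h
      exact ⟨i₀, fun j hj => part1 x.1 y.1 hx hy hxy' P hpath hdisj j i₀ hj hi₀⟩
    · exact ⟨0, fun j hj => absurd ⟨j, hj⟩ h⟩
  obtain ⟨i₀, hi₀⟩ := hex
  have havoid : ∀ j : Fin k', s ∉ (P (i₀.succAbove j)).support :=
    fun j hj => Fin.succAbove_ne i₀ j (hi₀ _ hj)
  choose Q hQe hQs using fun j : Fin k' =>
    Multigraph.aux_lift_walk (P (i₀.succAbove j)) x.2 y.2 (havoid j)
  refine ⟨fun j => Q j, fun j => ?_, fun i j hij => ?_⟩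
  · have := hpath (i₀.succAbove j)
    unfold Multigraph.Walk.IsPath at this ⊢
    rw [← hQs j] at this
    exact this.of_map _
  · intro e hei hej
    have hij' : i₀.succAbove i ≠ i₀.succAbove j :=
      fun h => hij (Fin.succAbove_right_injective h)
    refine hdisj _ _ hij' (a := e.1) ?_ ?_
    · rw [← hQe i]; exact List.mem_map_of_mem hei
    · rw [← hQe j]; exact List.mem_map_of_mem hej
end

section
/- Let G be a finite (s,k)-edge-connected graph and let e, f, g, h be distinct edges incident with s. Suppose the pair {e, f} is not k-liftable in G and the pair {g, h} is k-liftable in G. Then {e, f} is not k-liftable in the graph obtained from G by lifting the pair {g, h}. In particular, if the complement of L(G, s, k) is connected and the lifting graph has an isolated vertex e*, then after lifting any k-liftable pair of the remaining edges, e* remains an isolated vertex of the new lifting graph and the complement of the new lifting graph remains connected. -/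
universe u v

/-- A multigraph on the vertex type `W`, with its edge type bundled. -/
structure GraphOn (W : Type u) : Type (u + 1) where
  E : Type u
  graph : Multigraph W E

namespace Multigraph

variable {W F : Type u}

/-- The graph obtained from `G` by lifting the pair of edges `e₁, e₂` at `s`:
delete `e₁` and `e₂`, and add an edge between their non-`s` endpoints if these differ
(nothing is added if they coincide). -/
noncomputable def lift (G : Multigraph W F) (s : W) (e₁ e₂ : F) : GraphOn W where
  E := {e : F // e ≠ e₁ ∧ e ≠ e₂} ⊕ {_p : PUnit.{u + 1} // G.other s e₁ ≠ G.other s e₂}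
  graph :=
    { fst := Sum.elim (fun e => G.fst e.1) fun _ => G.other s e₁
      snd := Sum.elim (fun e => G.snd e.1) fun _ => G.other s e₂
      loopless := by
        rintro (e | p)
        · exact G.loopless e.1
        · exact p.2 }

/-- The pair of edges `e₁, e₂` incident with `s` is `k`-liftable: after lifting it,
there are `k` pairwise edge-disjoint paths between any two vertices different from `s`. -/
def IsLiftable (G : Multigraph W F) (s : W) (k : ℕ) (e₁ e₂ : F) : Prop :=
  e₁ ≠ e₂ ∧ G.IncVert s e₁ ∧ G.IncVert s e₂ ∧ (G.lift s e₁ e₂).graph.SEdgeConnected s k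

/-- The `k`-lifting graph `L(G, s, k)`: vertices are the edges of `G` incident with `s`,
two being adjacent iff they form a `k`-liftable pair. -/
noncomputable def liftingGraph (G : Multigraph W F) (s : W) (k : ℕ) :
    SimpleGraph {e : F // G.IncVert s e} :=
  SimpleGraph.fromRel fun e f => G.IsLiftable s k e.1 f.1

end Multigraph

/-- `x` is an isolated vertex of the simple graph `L`. -/
def SimpleGraph.IsIsolatedVertex {α : Type*} (L : SimpleGraph α) (x : α) : Prop :=
  ∀ y, ¬ L.Adj x y

/-- `L` is the union of an isolated vertex and a balanced complete bipartite graph. -/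
def SimpleGraph.IsIsolatedPlusBalancedCompleteBipartite {α : Type*} (L : SimpleGraph α) : Prop :=
  ∃ (x : α) (A B : Set α),
    x ∉ A ∧ x ∉ B ∧ A ∩ B = ∅ ∧ A ∪ B = {x}ᶜ ∧ A.ncard = B.ncard ∧
      ∀ a b, L.Adj a b ↔ (a ∈ A ∧ b ∈ B) ∨ (a ∈ B ∧ b ∈ A)

namespace Multigraph

section Aux

variable {V E : Type}

lemma Inc.symm' {G : Multigraph V E} {e : E} {a b : V} (h : G.Inc e a b) : G.Inc e b a :=
  Or.symm h

lemma other_ne (G : Multigraph V E) (s : V) (e : E) : G.other s e ≠ s := by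
  unfold other
  split_ifs with h
  · intro h2; exact G.loopless e (h.trans h2.symm)
  · exact h

lemma inc_other (G : Multigraph V E) {s : V} {e : E} (he : G.IncVert s e) :
    G.Inc e (G.other s e) s := by
  unfold other
  split_ifs with h
  · exact Or.inr ⟨h, rfl⟩
  · rcases he with h1 | h2
    · exact absurd h1 h
    · exact Or.inl ⟨rfl, h2⟩

namespace Walk

variable {G : Multigraph V E}

@[simp] lemma edges_nil {x : V} : (Walk.nil (G := G) x).edges = [] := rfl

@[simp] lemma edges_cons {x y z : V} (e : E) (h : G.Inc e x y) (p : G.Walk y z) :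
    (Walk.cons e h p).edges = e :: p.edges := rfl

@[simp] lemma support_nil {x : V} : (Walk.nil (G := G) x).support = [x] := rfl

@[simp] lemma support_cons {x y z : V} (e : E) (h : G.Inc e x y) (p : G.Walk y z) :
    (Walk.cons e h p).support = x :: p.support := rfl

lemma isPath_def {x y : V} (p : G.Walk x y) : p.IsPath ↔ p.support.Nodup := Iff.rfl

end Walk

lemma exists_dropUntil {G : Multigraph V E} {x y : V} (q : G.Walk x y) (hq : q.IsPath)
    (u : V) (hu : u ∈ q.support) :
    ∃ r : G.Walk u y, r.IsPath ∧ ∀ b ∈ r.edges, b ∈ q.edges := by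
  induction q with
  | nil z =>
      simp only [Walk.support_nil, List.mem_singleton] at hu
      subst hu
      exact ⟨Walk.nil _, by simp [Walk.isPath_def], by simp⟩
  | cons e he p ih =>
      rw [Walk.support_cons, List.mem_cons] at hu
      rcases hu with rfl | hu
      · exact ⟨Walk.cons e he p, hq, fun b hb => hb⟩
      · rw [Walk.isPath_def, Walk.support_cons, List.nodup_cons] at hq
        obtain ⟨r, h1, h2⟩ := ih hq.2 hu
        exact ⟨r, h1, fun b hb => List.mem_cons_of_mem _ (h2 b hb)⟩

lemma exists_path_subwalk {G : Multigraph V E} {x y : V} (p : G.Walk x y) :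
    ∃ q : G.Walk x y, q.IsPath ∧ ∀ b ∈ q.edges, b ∈ p.edges := by
  induction p with
  | nil z => exact ⟨Walk.nil z, by simp [Walk.isPath_def], by simp⟩
  | @cons x' y' z' e he p ih =>
      obtain ⟨q, hq, hqe⟩ := ih
      by_cases hx : x' ∈ q.support
      · obtain ⟨r, h1, h2⟩ := exists_dropUntil q hq _ hx
        exact ⟨r, h1, fun b hb => List.mem_cons_of_mem _ (hqe b (h2 b hb))⟩
      · refine ⟨Walk.cons e he q, ?_, ?_⟩
        · rw [Walk.isPath_def, Walk.support_cons, List.nodup_cons]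
          exact ⟨hx, hq⟩
        · intro b hb
          rw [Walk.edges_cons, List.mem_cons] at hb ⊢
          rcases hb with rfl | hb
          · exact Or.inl rfl
          · exact Or.inr (hqe b hb)

end Aux

end Multigraph
namespace Multigraph

section Transfer

variable {V E : Type}

/-- Projection of the edges of a lifted graph to `Option E`. -/
def liftProj (G : Multigraph V E) (s : V) (e f : E) : (G.lift s e f).E → Option E :=
  Sum.elim (fun c => some c.1) fun _ => none

/-- The list of "original" edges that an edge of the double lift corresponds to. -/
def Tm (G : Multigraph V E) (s : V) (g h : E)
    {P : (G.lift s g h).E → Prop} {Q : Prop}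
    (a : {c : (G.lift s g h).E // P c} ⊕ {_p : PUnit.{1} // Q}) : List (Option E) :=
  match a with
  | .inl ⟨.inl d, _⟩ => [some d.1]
  | .inl ⟨.inr _, _⟩ => [some g, some h]
  | .inr _ => [none]

lemma exists_convert (G : Multigraph V E) (s : V) (e f g h : E)
    (heg : e ≠ g) (heh : e ≠ h) (hfg : f ≠ g) (hfh : f ≠ h)
    (hg : G.IncVert s g) (hh : G.IncVert s h)
    {x y : V}
    (p : ((G.lift s g h).graph.lift s (Sum.inl ⟨e, heg, heh⟩)
        (Sum.inl ⟨f, hfg, hfh⟩)).graph.Walk x y) :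
    ∃ q : (G.lift s e f).graph.Walk x y,
      ∀ b ∈ q.edges, ∃ a ∈ p.edges, liftProj G s e f b ∈ Tm G s g h a := by
  induction p with
  | nil z => exact ⟨Walk.nil z, by simp⟩
  | @cons x1 y1 z1 a ha p ih =>
      obtain ⟨q, hq⟩ := ih
      obtain ⟨c, hc⟩ | pu := a
      · obtain ⟨d, hd1, hd2⟩ | pu2 := c
        · -- an original edge of G, distinct from e, f, g, h
          have hde : d ≠ e := fun hx => hc.1 (by subst hx; rfl)
          have hdf : d ≠ f := fun hx => hc.2 (by subst hx; rfl)
          have ha' : (G.lift s e f).graph.Inc (Sum.inl ⟨d, hde, hdf⟩) x1 y1 := ha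
          refine ⟨Walk.cons _ ha' q, ?_⟩
          intro b hb
          change b ∈ _ :: q.edges at hb
          replace hb := List.mem_cons.mp hb
          rcases hb with rfl | hb
          · exact ⟨_, List.mem_cons_self, by simp [Tm, liftProj]⟩
          · obtain ⟨a', ha2, ha3⟩ := hq b hb
            exact ⟨a', List.mem_cons_of_mem _ ha2, ha3⟩
        · -- the edge created by lifting g, h : replace by the path through s
          have ha' : (G.other s g = x1 ∧ G.other s h = y1) ∨
              (G.other s g = y1 ∧ G.other s h = x1) := ha
          have hge : g ≠ e := heg.symm
          have hgf : g ≠ f := hfg.symm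
          have hhe : h ≠ e := heh.symm
          have hhf : h ≠ f := hfh.symm
          rcases ha' with ⟨h1, h2⟩ | ⟨h1, h2⟩
          · have incg : (G.lift s e f).graph.Inc (Sum.inl ⟨g, hge, hgf⟩) x1 s :=
              h1 ▸ G.inc_other hg
            have inch : (G.lift s e f).graph.Inc (Sum.inl ⟨h, hhe, hhf⟩) s y1 :=
              h2 ▸ (G.inc_other hh).symm'
            refine ⟨Walk.cons _ incg (Walk.cons _ inch q), ?_⟩
            intro b hb
            change b ∈ _ :: _ :: q.edges at hb
            replace hb := (List.mem_cons.mp hb).imp_right List.mem_cons.mp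
            rcases hb with rfl | rfl | hb
            · exact ⟨_, List.mem_cons_self, by simp [Tm, liftProj]⟩
            · exact ⟨_, List.mem_cons_self, by simp [Tm, liftProj]⟩
            · obtain ⟨a', ha2, ha3⟩ := hq b hb
              exact ⟨a', List.mem_cons_of_mem _ ha2, ha3⟩
          · have inch : (G.lift s e f).graph.Inc (Sum.inl ⟨h, hhe, hhf⟩) x1 s :=
              h2 ▸ G.inc_other hh
            have incg : (G.lift s e f).graph.Inc (Sum.inl ⟨g, hge, hgf⟩) s y1 :=
              h1 ▸ (G.inc_other hg).symm'
            refine ⟨Walk.cons _ inch (Walk.cons _ incg q), ?_⟩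
            intro b hb
            change b ∈ _ :: _ :: q.edges at hb
            replace hb := (List.mem_cons.mp hb).imp_right List.mem_cons.mp
            rcases hb with rfl | rfl | hb
            · exact ⟨_, List.mem_cons_self, by simp [Tm, liftProj]⟩
            · exact ⟨_, List.mem_cons_self, by simp [Tm, liftProj]⟩
            · obtain ⟨a', ha2, ha3⟩ := hq b hb
              exact ⟨a', List.mem_cons_of_mem _ ha2, ha3⟩
      · -- the edge created by lifting e, f
        have hpf : G.other s e ≠ G.other s f := pu.2
        have ha' : (G.lift s e f).graph.Inc (Sum.inr ⟨PUnit.unit, hpf⟩) x1 y1 := ha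
        refine ⟨Walk.cons _ ha' q, ?_⟩
        intro b hb
        change b ∈ _ :: q.edges at hb
        replace hb := List.mem_cons.mp hb
        rcases hb with rfl | hb
        · exact ⟨_, List.mem_cons_self, by simp [Tm, liftProj]⟩
        · obtain ⟨a', ha2, ha3⟩ := hq b hb
          exact ⟨a', List.mem_cons_of_mem _ ha2, ha3⟩

lemma core (G : Multigraph V E) (s : V) (k : ℕ) {e f g h : E}
    (heg : e ≠ g) (heh : e ≠ h) (hfg : f ≠ g) (hfh : f ≠ h)
    (hg : G.IncVert s g) (hh : G.IncVert s h)
    (hK : ((G.lift s g h).graph.lift s (Sum.inl ⟨e, heg, heh⟩)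
        (Sum.inl ⟨f, hfg, hfh⟩)).graph.SEdgeConnected s k) :
    (G.lift s e f).graph.SEdgeConnected s k := by
  intro x y hx hy hxy
  obtain ⟨P, hP1, hP2⟩ := hK x y hx hy hxy
  choose Q hQ using fun i => exists_convert G s e f g h heg heh hfg hfh hg hh (P i)
  choose R hR1 hR2 using fun i => exists_path_subwalk (Q i)
  refine ⟨R, hR1, fun i j hij => ?_⟩
  intro b hbi hbj
  obtain ⟨a, ha, hTa⟩ := hQ i b (hR2 i b hbi)
  obtain ⟨a', ha', hTa'⟩ := hQ j b (hR2 j b hbj)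
  have hne : a ≠ a' := fun hE => hP2 i j hij ha (hE ▸ ha')
  rcases a with ⟨⟨d, hd1, hd2⟩ | pu2, hc⟩ | pu <;>
    rcases a' with ⟨⟨d', hd1', hd2'⟩ | pu2', hc'⟩ | pu' <;>
    simp only [Tm, List.mem_singleton, List.mem_cons, List.not_mem_nil, or_false] at hTa hTa'
  · rw [hTa] at hTa'
    obtain rfl : d = d' := Option.some.inj hTa'
    exact hne rfl
  · rw [hTa] at hTa'
    rcases hTa' with hTa' | hTa'
    · exact hd1 (Option.some.inj hTa')
    · exact hd2 (Option.some.inj hTa')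
  · rw [hTa] at hTa'; simp at hTa'
  · rw [hTa'] at hTa
    rcases hTa with hTa | hTa
    · exact hd1' (Option.some.inj hTa)
    · exact hd2' (Option.some.inj hTa)
  · obtain ⟨⟨⟩, hq2⟩ := pu2
    obtain ⟨⟨⟩, hq2'⟩ := pu2'
    exact hne rfl
  · rw [hTa'] at hTa; simp at hTa
  · rw [hTa] at hTa'; simp at hTa'
  · rw [hTa] at hTa'
    rcases hTa' with hTa' | hTa' <;> simp at hTa'
  · obtain ⟨⟨⟩, hq2⟩ := pu
    obtain ⟨⟨⟩, hq2'⟩ := pu'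
    exact hne rfl

end Transfer

end Multigraph
/-- Non-liftable pairs stay non-liftable after lifting a liftable pair;
in particular, if the complement of `L(G,s,k)` is connected and `e*` is an isolated
vertex of the lifting graph, then after lifting any `k`-liftable pair of the remaining
edges, `e*` remains isolated and the complement of the new lifting graph remains
connected. -/
theorem not_liftable_after_lift {V E : Type} [Finite V] [Finite E] (G : Multigraph V E)
    (s : V) (k : ℕ) (hconn : G.SEdgeConnected s k) :
    (∀ (e f g h : E) (hef : e ≠ f) (heg : e ≠ g) (heh : e ≠ h) (hfg : f ≠ g)
        (hfh : f ≠ h) (hgh : g ≠ h),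
      G.IncVert s e → G.IncVert s f → G.IncVert s g → G.IncVert s h →
      ¬ G.IsLiftable s k e f → G.IsLiftable s k g h →
      ¬ (G.lift s g h).graph.IsLiftable s k (Sum.inl ⟨e, heg, heh⟩) (Sum.inl ⟨f, hfg, hfh⟩)) ∧
    ((G.liftingGraph s k)ᶜ.Connected →
      ∀ (estar : {e : E // G.IncVert s e}),
        (G.liftingGraph s k).IsIsolatedVertex estar →
        ∀ (g h : E) (hg : g ≠ estar.1) (hh : h ≠ estar.1) (hgh : g ≠ h),
          G.IsLiftable s k g h →
          ((G.lift s g h).graph.liftingGraph s k).IsIsolatedVertex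
              ⟨Sum.inl ⟨estar.1, hg.symm, hh.symm⟩, estar.2⟩ ∧
            (((G.lift s g h).graph.liftingGraph s k)ᶜ).Connected) := by
  have part1 : ∀ (e f g h : E) (hef : e ≠ f) (heg : e ≠ g) (heh : e ≠ h) (hfg : f ≠ g)
        (hfh : f ≠ h) (hgh : g ≠ h),
      G.IncVert s e → G.IncVert s f → G.IncVert s g → G.IncVert s h →
      ¬ G.IsLiftable s k e f → G.IsLiftable s k g h →
      ¬ (G.lift s g h).graph.IsLiftable s k (Sum.inl ⟨e, heg, heh⟩)
          (Sum.inl ⟨f, hfg, hfh⟩) := by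
    intro e f g h hef heg heh hfg hfh hgh he hf hgI hhI hnef _hlif hdl
    exact hnef ⟨hef, he, hf, Multigraph.core G s k heg heh hfg hfh hgI hhI hdl.2.2.2⟩
  refine ⟨part1, ?_⟩
  intro _hLc estar hiso g h hg hh hgh hlif
  have hgI : G.IncVert s g := hlif.2.1
  have hhI : G.IncVert s h := hlif.2.2.1
  have hisoH : ((G.lift s g h).graph.liftingGraph s k).IsIsolatedVertex
      ⟨Sum.inl ⟨estar.1, hg.symm, hh.symm⟩, estar.2⟩ := by
    rintro ⟨(⟨d, hdg, hdh⟩ | ⟨pu, hpu⟩), hyinc⟩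
    swap
    · exfalso
      have h2 : G.other s g = s ∨ G.other s h = s := hyinc
      rcases h2 with h2 | h2
      · exact G.other_ne s g h2
      · exact G.other_ne s h h2
    have hdI : G.IncVert s d := hyinc
    simp only [Multigraph.liftingGraph, SimpleGraph.fromRel_adj]
    rintro ⟨hvne, hl | hl⟩
    · by_cases hde : d = estar.1
      · exact hvne (by subst hde; rfl)
      · have hAdjG := hiso ⟨d, hdI⟩
        simp only [Multigraph.liftingGraph, SimpleGraph.fromRel_adj] at hAdjG
        push_neg at hAdjG
        have hne2 : estar ≠ ⟨d, hdI⟩ := fun hE => hde (congrArg Subtype.val hE).symm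
        obtain ⟨hn1, hn2⟩ := hAdjG hne2
        exact part1 estar.1 d g h (Ne.symm hde) (Ne.symm hg) (Ne.symm hh) hdg hdh hgh
          estar.2 hdI hgI hhI hn1 hlif hl
    · by_cases hde : d = estar.1
      · exact hvne (by subst hde; rfl)
      · have hAdjG := hiso ⟨d, hdI⟩
        simp only [Multigraph.liftingGraph, SimpleGraph.fromRel_adj] at hAdjG
        push_neg at hAdjG
        have hne2 : estar ≠ ⟨d, hdI⟩ := fun hE => hde (congrArg Subtype.val hE).symm
        obtain ⟨hn1, hn2⟩ := hAdjG hne2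
        exact part1 d estar.1 g h hde hdg hdh (Ne.symm hg) (Ne.symm hh) hgh
          hdI estar.2 hgI hhI hn2 hlif hl
  refine ⟨hisoH, ?_⟩
  rw [SimpleGraph.connected_iff]
  refine ⟨?_, ⟨⟨Sum.inl ⟨estar.1, hg.symm, hh.symm⟩, estar.2⟩⟩⟩
  have hreach : ∀ w, (((G.lift s g h).graph.liftingGraph s k)ᶜ).Reachable
      ⟨Sum.inl ⟨estar.1, hg.symm, hh.symm⟩, estar.2⟩ w := by
    intro w
    by_cases hw : w = ⟨Sum.inl ⟨estar.1, hg.symm, hh.symm⟩, estar.2⟩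
    · exact hw ▸ SimpleGraph.Reachable.refl _
    · exact SimpleGraph.Adj.reachable ((SimpleGraph.compl_adj _ _ _).mpr
        ⟨fun hE => hw hE.symm, hisoH w⟩)
  intro u v
  exact (hreach u).symm.trans (hreach v)
end

section
/- Let k be a positive integer, let G be an infinite, locally finite, k-edge-connected graph, and let A be a finite set of vertices of G. Then there exists a finite set S of vertices with A ⊆ S and a collection R of pairwise edge-disjoint rays in G, one for each edge of δ(S), such that each edge of δ(S) is the first edge of the corresponding ray of R. Moreover, if G is 1-ended, all rays of R belong to the unique end of G. -/
universe u v

namespace Multigraph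

open Classical

variable {V : Type u} {E : Type v} {G : Multigraph V E}

/-- A step: an edge together with the (source, destination) of its traversal. -/
abbrev Stp (V : Type u) (E : Type v) := E × V × V

/-- `G.WL a l b`: `l` is a valid list of steps of a walk from `a` to `b`. -/
inductive WL (G : Multigraph V E) : V → List (Stp V E) → V → Prop
  | nil (a : V) : WL G a [] a
  | cons {e : E} {x y b : V} {l : List (Stp V E)} (h : G.Inc e x y) (hl : WL G y l b) :
      WL G x ((e, x, y) :: l) b

namespace WL

theorem append {a b c : V} {l₁ l₂ : List (Stp V E)} (h₁ : G.WL a l₁ b) (h₂ : G.WL b l₂ c) :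
    G.WL a (l₁ ++ l₂) c := by
  induction h₁ with
  | nil => simpa
  | cons h hl ih => exact WL.cons h (ih h₂)

theorem append_split {a c : V} {l₁ l₂ : List (Stp V E)} (h : G.WL a (l₁ ++ l₂) c) :
    ∃ b, G.WL a l₁ b ∧ G.WL b l₂ c := by
  induction l₁ generalizing a with
  | nil => exact ⟨a, WL.nil a, h⟩
  | cons s t ih =>
    cases h with
    | cons h hl =>
      obtain ⟨b, hb1, hb2⟩ := ih hl
      exact ⟨b, WL.cons h hb1, hb2⟩

theorem inc_of_mem {a b : V} {l : List (Stp V E)} (h : G.WL a l b) {s : Stp V E}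
    (hs : s ∈ l) : G.Inc s.1 s.2.1 s.2.2 := by
  induction h with
  | nil => simp at hs
  | cons h hl ih =>
    rcases List.mem_cons.1 hs with rfl | hs
    · exact h
    · exact ih hs

theorem prefix_exists {a b : V} {l l' : List (Stp V E)} (h : G.WL a l b) (hp : l' <+: l) :
    ∃ c, G.WL a l' c := by
  obtain ⟨t, rfl⟩ := hp
  obtain ⟨c, hc, -⟩ := append_split h
  exact ⟨c, hc⟩

end WL

/-- The support (vertex list) of a step list starting at `a`. -/
def sup (a : V) (l : List (Stp V E)) : List V := a :: l.map (fun s => s.2.2)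

theorem WL.srcs_append_last {a b : V} {l : List (Stp V E)} (h : G.WL a l b) :
    l.map (fun s => s.2.1) ++ [b] = sup a l := by
  induction h with
  | nil => rfl
  | cons h hl ih => simp_all [sup]

theorem WL.last_mem_sup {a b : V} {l : List (Stp V E)} (h : G.WL a l b) : b ∈ sup a l := by
  have := h.srcs_append_last
  rw [← this]; simp

/-- Drop an initial part of a walk, starting from a vertex in its support. -/
theorem WL.dropUntil {y b x : V} {l : List (Stp V E)} (h : G.WL y l b) (hx : x ∈ sup y l) :
    ∃ l'', l''.Sublist l ∧ G.WL x l'' b ∧ (sup x l'') <:+ (sup y l) := by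
  induction h with
  | nil =>
    simp [sup] at hx
    subst hx
    exact ⟨[], by simp, WL.nil x, by simp⟩
  | @cons e z w b l hinc hl ih =>
    by_cases hxz : x = z
    · subst hxz
      exact ⟨_, List.Sublist.refl _, WL.cons hinc hl, by simp⟩
    · have hx' : x ∈ sup w l := by
        simp only [sup, List.map_cons, List.mem_cons] at hx ⊢
        tauto
      obtain ⟨l'', hsub, hwl, hsuf⟩ := ih hx'
      refine ⟨l'', hsub.trans (List.sublist_cons_self _ _), hwl, ?_⟩
      exact hsuf.trans (by simp [sup])

/-- Trimming a walk to a walk with no repeated vertices, using a sublist of the steps. -/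
theorem WL.trim {a b : V} {l : List (Stp V E)} (h : G.WL a l b) :
    ∃ l', l'.Sublist l ∧ G.WL a l' b ∧ (sup a l').Nodup := by
  induction h with
  | nil => exact ⟨[], by simp, WL.nil _, by simp [sup]⟩
  | @cons e x y b l hinc hl ih =>
    obtain ⟨l', hsub, hwl, hnd⟩ := ih
    by_cases hx : x ∈ sup y l'
    · obtain ⟨l'', hsub', hwl', hsuf⟩ := hwl.dropUntil hx
      exact ⟨l'', (hsub'.trans hsub).trans (List.sublist_cons_self _ _), hwl',
        hnd.sublist hsuf.sublist⟩
    · refine ⟨(e, x, y) :: l', hsub.cons₂ _, WL.cons hinc hwl, ?_⟩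
      simp only [sup, List.nodup_cons, List.map] at hnd ⊢
      constructor
      · intro hmem
        exact hx (by simp [sup, hmem])
      · exact hnd


theorem inc_pair {e : E} {x y u v : V} (h1 : G.Inc e x y) (h2 : G.Inc e u v) :
    (x = u ∧ y = v) ∨ (x = v ∧ y = u) := by
  rcases h1 with ⟨h1a, h1b⟩ | ⟨h1a, h1b⟩ <;> rcases h2 with ⟨h2a, h2b⟩ | ⟨h2a, h2b⟩ <;> subst_vars
  · exact Or.inl ⟨rfl, rfl⟩
  · exact Or.inr ⟨rfl, rfl⟩
  · exact Or.inr ⟨rfl, rfl⟩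
  · exact Or.inl ⟨rfl, rfl⟩

theorem WL.edges_nodup {a b : V} {l : List (Stp V E)} (h : G.WL a l b)
    (hnd : (sup a l).Nodup) : (l.map Prod.fst).Nodup := by
  induction h with
  | nil => simp
  | @cons e x y b l hinc hl ih =>
    simp only [sup, List.map_cons, List.nodup_cons] at hnd ⊢
    have hx : x ∉ sup y l := by simpa [sup] using hnd.1
    refine ⟨?_, ih (by simpa [sup] using hnd.2)⟩
    intro hmem
    obtain ⟨t, htl, hte⟩ := List.mem_map.1 hmem
    have hinc' : G.Inc e t.2.1 t.2.2 := hte ▸ hl.inc_of_mem htl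
    have hsrc : t.2.1 ∈ sup y l := by
      have := hl.srcs_append_last
      rw [← this]
      exact List.mem_append_left _ (List.mem_map_of_mem htl)
    have hdst : t.2.2 ∈ sup y l := by
      simp only [sup, List.mem_cons]
      exact Or.inr (List.mem_map_of_mem htl)
    rcases inc_pair hinc hinc' with ⟨hx1, -⟩ | ⟨hx1, -⟩
    · exact hx (hx1 ▸ hsrc)
    · exact hx (hx1 ▸ hdst)

section Cross

variable {X : Set V}

theorem step_cross_iff_mem_edgeCut {s : Stp V E} (hinc : G.Inc s.1 s.2.1 s.2.2) :
    s.1 ∈ G.edgeCut X ↔ ((s.2.1 ∈ X ∧ s.2.2 ∉ X) ∨ (s.2.1 ∉ X ∧ s.2.2 ∈ X)) := by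
  rcases hinc with ⟨h1, h2⟩ | ⟨h1, h2⟩ <;> rw [edgeCut] <;> simp [h1, h2] <;> tauto

theorem WL.exists_crossing {a b : V} {l : List (Stp V E)} (h : G.WL a l b) :
    a ∈ X → b ∉ X → ∃ s ∈ l, s.2.1 ∈ X ∧ s.2.2 ∉ X := by
  induction h with
  | nil => exact fun ha hb => absurd ha hb
  | @cons e x y c l hinc hl ih =>
    intro ha hb
    by_cases hy : y ∈ X
    · obtain ⟨s, hs, hcr⟩ := ih hy hb
      exact ⟨s, List.mem_cons_of_mem _ hs, hcr⟩
    · exact ⟨(e, x, y), List.mem_cons_self, ha, hy⟩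

theorem WL.all_out {a b : V} {l : List (Stp V E)} (h : G.WL a l b) :
    a ∉ X → (∀ s ∈ l, s.2.2 ∈ X → s.2.1 ∈ X) →
    ∀ s ∈ l, s.2.1 ∉ X ∧ s.2.2 ∉ X := by
  induction h with
  | nil => simp
  | @cons e x y c l hinc hl ih =>
    intro ha hno
    have hy : y ∉ X := fun hy => ha (hno _ (List.mem_cons_self) hy)
    intro s hs
    rcases List.mem_cons.1 hs with rfl | hs
    · exact ⟨ha, hy⟩
    · exact ih hy (fun t ht => hno t (List.mem_cons_of_mem _ ht)) s hs

theorem WL.unique_crossing {a b : V} {l : List (Stp V E)} (h : G.WL a l b) :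
    a ∈ X → (∀ s ∈ l, s.2.2 ∈ X → s.2.1 ∈ X) →
    ∀ s ∈ l, ∀ t ∈ l, (s.2.1 ∈ X ∧ s.2.2 ∉ X) → (t.2.1 ∈ X ∧ t.2.2 ∉ X) → s = t := by
  induction h with
  | nil => simp
  | @cons e x y c l hinc hl ih =>
    intro ha hno s hs t ht hscr htcr
    by_cases hy : y ∈ X
    · have hs' : s ∈ l := by
        rcases List.mem_cons.1 hs with rfl | hs'
        · exact absurd hy hscr.2
        · exact hs'
      have ht' : t ∈ l := by
        rcases List.mem_cons.1 ht with rfl | ht'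
        · exact absurd hy htcr.2
        · exact ht'
      exact ih hy (fun u hu => hno u (List.mem_cons_of_mem _ hu)) s hs' t ht' hscr htcr
    · have hout := hl.all_out hy (fun u hu => hno u (List.mem_cons_of_mem _ hu))
      have hs' : s = (e, x, y) := by
        rcases List.mem_cons.1 hs with rfl | hs'
        · rfl
        · exact absurd hscr.1 (hout s hs').1
      have ht' : t = (e, x, y) := by
        rcases List.mem_cons.1 ht with rfl | ht'
        · rfl
        · exact absurd htcr.1 (hout t ht').1
      rw [hs', ht']

end Cross

section Seg

variable {S : Set V}

theorem WL.sup_suffix {a x : V} {C l' : List (Stp V E)} (hC : G.WL a C x) :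
    sup x l' <:+ sup a (C ++ l') := by
  induction hC with
  | nil => exact List.suffix_refl _
  | @cons e z w b C' hinc hC' ih =>
    have : sup z (((e, z, w) :: C') ++ l') = z :: sup w (C' ++ l') := by simp [sup]
    rw [this]
    exact ih.trans (List.suffix_cons _ _)

theorem WL.last_exit_aux {a b : V} {l : List (Stp V E)} (h : G.WL a l b) :
    b ∉ S → (a ∈ S ∨ ∃ s ∈ l, s.2.2 ∈ S) →
    ∃ x ∈ S, ∃ C l', l = C ++ l' ∧ G.WL a C x ∧ G.WL x l' b ∧ l' ≠ [] ∧
      ∀ s ∈ l', s.2.2 ∉ S := by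
  induction h with
  | nil =>
    intro hb hor
    rcases hor with ha | ⟨s, hs, -⟩
    · exact absurd ha hb
    · simp at hs
  | @cons e x y c l hinc hl ih =>
    intro hb hor
    by_cases hc : y ∈ S ∨ ∃ s ∈ l, s.2.2 ∈ S
    · obtain ⟨x', hx', C, l', heq, hC, hwl', hne, hout⟩ := ih hb hc
      exact ⟨x', hx', (e, x, y) :: C, l', by rw [heq]; rfl, WL.cons hinc hC, hwl', hne, hout⟩
    · push_neg at hc
      have hx : x ∈ S := by
        rcases hor with hx | ⟨s, hs, hsS⟩
        · exact hx
        · rcases List.mem_cons.1 hs with rfl | hs'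
          · exact absurd hsS hc.1
          · exact absurd hsS (hc.2 s hs')
      refine ⟨x, hx, [], (e, x, y) :: l, rfl, WL.nil x, WL.cons hinc hl, by simp, ?_⟩
      intro s hs
      rcases List.mem_cons.1 hs with rfl | hs'
      · exact hc.1
      · exact hc.2 s hs'

theorem WL.last_exit {a b : V} {l : List (Stp V E)} (h : G.WL a l b) (ha : a ∈ S)
    (hb : b ∉ S) :
    ∃ x ∈ S, ∃ C l', l = C ++ l' ∧ G.WL a C x ∧ G.WL x l' b ∧ l' ≠ [] ∧
      ∀ s ∈ l', s.2.2 ∉ S :=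
  h.last_exit_aux hb (Or.inl ha)

theorem WL.head_src {a b : V} {s : Stp V E} {l : List (Stp V E)} (h : G.WL a (s :: l) b) :
    s.2.1 = a := by cases h; rfl

theorem WL.chain {a b : V} {l : List (Stp V E)} (h : G.WL a l b) :
    ∀ i, (hi : i + 1 < l.length) →
      (l[i + 1]'hi).2.1 = (l[i]'(Nat.lt_of_succ_lt hi)).2.2 := by
  induction h with
  | nil => simp
  | @cons e x y c l hinc hl ih =>
    intro i hi
    match i with
    | 0 =>
      match l, hl with
      | t :: l', hl => exact hl.head_src
    | Nat.succ j => exact ih j (by simpa using hi)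

theorem WL.srcs_nodup {a b : V} {l : List (Stp V E)} (h : G.WL a l b)
    (hnd : (sup a l).Nodup) : (l.map (fun s => s.2.1)).Nodup := by
  have h1 : List.Sublist (l.map (fun s => s.2.1)) (sup a l) := by
    rw [← h.srcs_append_last]
    exact List.sublist_append_left _ _
  exact hnd.sublist h1

end Seg

section Fin

theorem edgeCut_finite (hlf : G.LocallyFinite) {X : Set V} (hX : X.Finite) :
    (G.edgeCut X).Finite := by
  refine Set.Finite.subset (hX.biUnion (fun v _ => hlf v)) ?_
  rintro e (⟨h1, h2⟩ | ⟨h1, h2⟩)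
  · exact Set.mem_biUnion h1 (Or.inl rfl)
  · exact Set.mem_biUnion h2 (Or.inr rfl)

theorem other_eq {e : E} {x y : V} (h : G.Inc e x y) : G.other x e = y := by
  rcases h with ⟨h1, h2⟩ | ⟨h1, h2⟩
  · rw [other, if_pos h1, h2]
  · rw [other]
    have hne : G.fst e ≠ x := fun hc => G.loopless e (by rw [hc, h2])
    rw [if_neg hne, h1]

theorem firstSteps_finite (hlf : G.LocallyFinite) {W : Set V} (hW : W.Finite) :
    {s : Stp V E | s.2.1 ∈ W ∧ G.Inc s.1 s.2.1 s.2.2}.Finite := by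
  refine Set.Finite.subset (hW.biUnion (fun x _ => ((hlf x).image
    (fun e => ((e, x, G.other x e) : Stp V E))))) ?_
  rintro ⟨e, x, y⟩ ⟨hx, hinc⟩
  refine Set.mem_biUnion hx ⟨e, ?_, ?_⟩
  · rcases hinc with ⟨h1, -⟩ | ⟨-, h2⟩
    · exact Or.inl h1
    · exact Or.inr h2
  · simp [other_eq hinc]

theorem steps_finite (hlf : G.LocallyFinite) (L : ℕ) :
    ∀ (W : Set V), W.Finite →
      {l : List (Stp V E) | l.length ≤ L ∧ ∃ a ∈ W, ∃ b, G.WL a l b}.Finite := by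
  induction L with
  | zero =>
    intro W hW
    refine Set.Finite.subset (Set.finite_singleton []) ?_
    rintro l ⟨hlen, -⟩
    simpa using List.length_eq_zero_iff.1 (Nat.le_zero.1 hlen)
  | succ L ih =>
    intro W hW
    have hFS := firstSteps_finite hlf hW (G := G)
    have hW' : (W ∪ (fun s : Stp V E => s.2.2) '' {s | s.2.1 ∈ W ∧ G.Inc s.1 s.2.1 s.2.2}).Finite :=
      hW.union (hFS.image _)
    have hrec := ih _ hW'
    refine Set.Finite.subset ((Set.finite_singleton []).union
      ((hFS.prod hrec).image (fun p => p.1 :: p.2))) ?_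
    rintro l ⟨hlen, a, ha, b, hwl⟩
    rcases l with _ | ⟨⟨e, x, y⟩, rest⟩
    · exact Or.inl rfl
    · cases hwl with
      | cons hinc hl =>
        refine Or.inr ⟨((e, a, y), rest), ⟨⟨ha, hinc⟩, ?_, ?_⟩, rfl⟩
        · simpa using Nat.succ_le_succ_iff.1 hlen
        · exact ⟨y, Or.inr ⟨(e, a, y), ⟨ha, hinc⟩, rfl⟩, b, hl⟩

/-- The ball of radius `n` around a vertex set `S`. -/
def ball (G : Multigraph V E) (S : Set V) (n : ℕ) : Set V :=
  {v | ∃ a ∈ S, ∃ l, G.WL a l v ∧ l.length ≤ n}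

theorem subset_ball (S : Set V) (n : ℕ) : S ⊆ G.ball S n :=
  fun a ha => ⟨a, ha, [], WL.nil a, by simp⟩

theorem ball_finite (hlf : G.LocallyFinite) {S : Set V} (hS : S.Finite) (n : ℕ) :
    (G.ball S n).Finite := by
  have hF := steps_finite (G := G) hlf n S hS
  refine Set.Finite.subset (hS.union (hF.biUnion
    (fun l _ => (l.finite_toSet.image (fun s => s.2.2))))) ?_
  rintro v ⟨a, ha, l, hwl, hlen⟩
  have hv : v ∈ sup a l := hwl.last_mem_sup
  rcases List.mem_cons.1 hv with rfl | hv'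
  · exact Or.inl ha
  · obtain ⟨s, hs, hse⟩ := List.mem_map.1 hv'
    exact Or.inr (Set.mem_biUnion ⟨hlen, a, ha, v, hwl⟩ ⟨s, hs, hse⟩)

end Fin

section Menger

theorem Inc.symm {e : E} {x y : V} (h : G.Inc e x y) : G.Inc e y x := h.elim Or.inr Or.inl

theorem WL.cons_inv {c b u y : V} {e : E} {l : List (Stp V E)}
    (h : G.WL c ((e, u, y) :: l) b) : c = u ∧ G.Inc e u y ∧ G.WL y l b := by
  cases h; exact ⟨rfl, by assumption, by assumption⟩

theorem WL.split_at_step {a b x y : V} {e : E} {C D l : List (Stp V E)}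
    (h : G.WL a l b) (heq : l = C ++ (e, x, y) :: D) :
    G.WL a C x ∧ G.Inc e x y ∧ G.WL y D b := by
  subst heq
  obtain ⟨c, hC, hcons⟩ := WL.append_split h
  obtain ⟨heq, hinc, hrest⟩ := hcons.cons_inv
  exact ⟨heq ▸ hC, hinc, hrest⟩

/-- A system of `j` pairwise edge-disjoint walks from `S` to outside `T`. -/
structure Sys (G : Multigraph V E) (S T : Set V) (j : ℕ) where
  a : Fin j → V
  b : Fin j → V
  l : Fin j → List (Stp V E)
  wl : ∀ i, G.WL (a i) (l i) (b i)
  ha : ∀ i, a i ∈ S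
  hb : ∀ i, b i ∉ T
  nd : ∀ i, ((l i).map Prod.fst).Nodup
  disj : ∀ i i', i ≠ i' → ∀ e ∈ (l i).map Prod.fst, e ∉ (l i').map Prod.fst

variable {S T : Set V} {j : ℕ}

/-- An edge is used by the system. -/
def Sys.used (P : G.Sys S T j) (e : E) : Prop := ∃ i, e ∈ (P.l i).map Prod.fst

/-- A residual walk: every step is either on an unused edge, or traverses a used
edge backwards. -/
def Sys.Residual (P : G.Sys S T j) (w : List (Stp V E)) : Prop :=
  ∀ s ∈ w, (¬ P.used s.1) ∨ ∃ i, (s.1, s.2.2, s.2.1) ∈ P.l i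

/-- Vertices reachable from `S` by a residual walk. -/
def Sys.Reach (P : G.Sys S T j) : Set V :=
  {v | ∃ a ∈ S, ∃ w, G.WL a w v ∧ P.Residual w}

theorem Sys.subset_reach (P : G.Sys S T j) : S ⊆ P.Reach :=
  fun a ha => ⟨a, ha, [], WL.nil a, fun s hs => by simp at hs⟩

theorem Sys.residual_sublist (P : G.Sys S T j) {w w' : List (Stp V E)}
    (hsub : List.Sublist w' w) (h : P.Residual w) : P.Residual w' :=
  fun s hs => h s (hsub.mem hs)

/-- No step of any walk of the system enters the reachable set from outside. -/
theorem Sys.no_inward (P : G.Sys S T j) (i : Fin j) :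
    ∀ s ∈ P.l i, s.2.2 ∈ P.Reach → s.2.1 ∈ P.Reach := by
  rintro ⟨e, u, y⟩ hs ⟨c, hc, w, hwl, hres⟩
  refine ⟨c, hc, w ++ [(e, y, u)], hwl.append ?_, ?_⟩
  · exact WL.cons (P.wl i |>.inc_of_mem hs).symm (WL.nil u)
  · intro t ht
    rcases List.mem_append.1 ht with ht | ht
    · exact hres t ht
    · rcases List.mem_singleton.1 ht with rfl
      exact Or.inr ⟨i, hs⟩

/-- Every edge of the cut of the reachable set is used by the system. -/
theorem Sys.cut_used (P : G.Sys S T j) {e : E} (he : e ∈ G.edgeCut P.Reach) :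
    P.used e := by
  by_contra hu
  obtain ⟨x, y, hinc, hx, hy⟩ : ∃ x y, G.Inc e x y ∧ x ∈ P.Reach ∧ y ∉ P.Reach := by
    rcases he with ⟨h1, h2⟩ | ⟨h1, h2⟩
    · exact ⟨G.fst e, G.snd e, Or.inl ⟨rfl, rfl⟩, h1, h2⟩
    · exact ⟨G.snd e, G.fst e, Or.inr ⟨rfl, rfl⟩, h2, h1⟩
  obtain ⟨c, hc, w, hwl, hres⟩ := hx
  refine hy ⟨c, hc, w ++ [(e, x, y)], hwl.append (WL.cons hinc (WL.nil y)), ?_⟩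
  intro t ht
  rcases List.mem_append.1 ht with ht | ht
  · exact hres t ht
  · rcases List.mem_singleton.1 ht with rfl
    exact Or.inl hu

theorem Sys.cut_card_le (P : G.Sys S T j) (hno : P.Reach ⊆ T) :
    (G.edgeCut P.Reach).ncard ≤ j := by
  classical
  set X := P.Reach with hX
  have hinj : ∀ e : G.edgeCut X, ∃ i : Fin j, (e : E) ∈ (P.l i).map Prod.fst :=
    fun e => P.cut_used e.2
  choose f hf using hinj
  have hfinj : Function.Injective f := by
    intro e e' hee
    obtain ⟨s, hs, hse⟩ := List.mem_map.1 (hf e)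
    obtain ⟨s', hs', hse'⟩ := List.mem_map.1 (hf e')
    rw [hee] at hs
    have hcr : ∀ (t : Stp V E), t ∈ P.l (f e') → (t.1 : E) ∈ G.edgeCut X →
        t.2.1 ∈ X ∧ t.2.2 ∉ X := by
      intro t ht hte
      have hinc := (P.wl (f e')).inc_of_mem ht
      rcases (step_cross_iff_mem_edgeCut hinc).1 hte with h | h
      · exact h
      · exact absurd (P.no_inward (f e') t ht h.2) h.1
    have := (P.wl (f e')).unique_crossing (P.subset_reach (P.ha (f e')))
      (P.no_inward (f e')) s hs s' hs'
      (hcr s hs (hse.symm ▸ e.2)) (hcr s' hs' (hse'.symm ▸ e'.2))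
    apply Subtype.ext
    rw [← hse, ← hse', this]
  have : Nat.card (G.edgeCut X) ≤ Nat.card (Fin j) :=
    Nat.card_le_card_of_injective f hfinj
  simpa [Nat.card_coe_set_eq] using this

theorem exists_split_last {α : Type*} (U : α → Prop) :
    ∀ (l : List α), (∃ s ∈ l, U s) →
      ∃ C s D, l = C ++ s :: D ∧ U s ∧ ∀ t ∈ D, ¬ U t := by
  intro l
  induction l with
  | nil => rintro ⟨s, hs, -⟩; simp at hs
  | cons h rest ih =>
    intro hex
    by_cases hr : ∃ s ∈ rest, U s
    · obtain ⟨C, s, D, heq, hU, hD⟩ := ih hr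
      exact ⟨h :: C, s, D, by rw [heq]; rfl, hU, hD⟩
    · push_neg at hr
      have hUh : U h := by
        obtain ⟨s, hs, hUs⟩ := hex
        rcases List.mem_cons.1 hs with rfl | hs'
        · exact hUs
        · exact absurd hUs (hr s hs')
      exact ⟨[], h, rest, rfl, hUh, hr⟩

end Menger

section Augment

variable {S T : Set V} {j : ℕ}

theorem Sys.augment : ∀ (μ : ℕ) (P : G.Sys S T j) (a v : V) (w : List (Stp V E)),
    G.WL a w v → a ∈ S → v ∉ T → P.Residual w → (sup a w).Nodup →
    w.countP (fun s => decide (P.used s.1)) = μ →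
    Nonempty (G.Sys S T (j + 1)) := by
  intro μ
  induction μ using Nat.strong_induction_on with
  | _ μ ih =>
  intro P a v w hwl ha hv hres hnd hcount
  rcases Nat.eq_zero_or_pos μ with rfl | hpos
  · -- w is edge-disjoint from the system: append it
    have hunused : ∀ s ∈ w, ¬ P.used s.1 := by
      intro s hs
      have := List.countP_eq_zero.1 hcount s hs
      simpa using this
    refine ⟨⟨Fin.snoc P.a a, Fin.snoc P.b v, Fin.snoc P.l w, ?_, ?_, ?_, ?_, ?_⟩⟩
    · intro i
      induction i using Fin.lastCases with
      | last => simpa [Fin.snoc_last] using hwl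
      | cast i => simpa [Fin.snoc_castSucc] using P.wl i
    · intro i
      induction i using Fin.lastCases with
      | last => simpa [Fin.snoc_last] using ha
      | cast i => simpa [Fin.snoc_castSucc] using P.ha i
    · intro i
      induction i using Fin.lastCases with
      | last => simpa [Fin.snoc_last] using hv
      | cast i => simpa [Fin.snoc_castSucc] using P.hb i
    · intro i
      induction i using Fin.lastCases with
      | last => simpa [Fin.snoc_last] using hwl.edges_nodup hnd
      | cast i => simpa [Fin.snoc_castSucc] using P.nd i
    · intro i i' hne x hx hx'
      induction i using Fin.lastCases with
      | last =>
        induction i' using Fin.lastCases with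
        | last => exact hne rfl
        | cast i' =>
          rw [Fin.snoc_last] at hx
          rw [Fin.snoc_castSucc] at hx'
          obtain ⟨s, hs, hse⟩ := List.mem_map.1 hx
          exact hunused s hs ⟨i', hse ▸ hx'⟩
      | cast i =>
        induction i' using Fin.lastCases with
        | last =>
          rw [Fin.snoc_castSucc] at hx
          rw [Fin.snoc_last] at hx'
          obtain ⟨s, hs, hse⟩ := List.mem_map.1 hx'
          exact hunused s hs ⟨i, hse ▸ hx⟩
        | cast i' =>
          rw [Fin.snoc_castSucc] at hx hx'
          exact P.disj i i' (fun h => hne (congrArg _ h)) x hx hx'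
  · -- there is a used step; do the exchange surgery
    have hex : ∃ s ∈ w, P.used s.1 := by
      have : 0 < w.countP (fun s => decide (P.used s.1)) := hcount ▸ hpos
      obtain ⟨s, hs, hdec⟩ := List.countP_pos_iff.1 this
      exact ⟨s, hs, by simpa using hdec⟩
    obtain ⟨C, s, D, heqw, hUs, hDun⟩ := exists_split_last (fun s => P.used s.1) w hex
    obtain ⟨e, sx, sy⟩ := s
    have hsmem : (e, sx, sy) ∈ w := heqw ▸ List.mem_append_right _ (List.mem_cons_self)
    have hrev : ∃ i, (e, sy, sx) ∈ P.l i := by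
      rcases hres _ hsmem with h | h
      · exact absurd hUs h
      · exact h
    obtain ⟨i₀, hrev⟩ := hrev
    obtain ⟨A, B, heqP⟩ : ∃ A B, P.l i₀ = A ++ (e, sy, sx) :: B := List.append_of_mem hrev
    obtain ⟨hC, hinc₁, hD⟩ := hwl.split_at_step heqw
    obtain ⟨hA, hinc₀, hB⟩ := (P.wl i₀).split_at_step heqP
    -- edge nodup facts
    have ndw : ((C ++ (e, sx, sy) :: D).map Prod.fst).Nodup := by
      rw [← heqw]; exact hwl.edges_nodup hnd
    rw [List.map_append, List.map_cons] at ndw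
    have hCD : ∀ x ∈ C.map Prod.fst, x ∉ (D.map Prod.fst) :=
      fun x hx hx' => (List.disjoint_of_nodup_append ndw) hx (List.mem_cons_of_mem _ hx')
    have heC : e ∉ C.map Prod.fst :=
      fun hc => (List.disjoint_of_nodup_append ndw) hc (List.mem_cons_self)
    have ndP : ((A ++ (e, sy, sx) :: B).map Prod.fst).Nodup := heqP ▸ P.nd i₀
    rw [List.map_append, List.map_cons] at ndP
    have hAB : ∀ x ∈ A.map Prod.fst, x ∉ (B.map Prod.fst) :=
      fun x hx hx' => (List.disjoint_of_nodup_append ndP) hx (List.mem_cons_of_mem _ hx')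
    have hDunused : ∀ x ∈ D.map Prod.fst, ¬ P.used x := by
      intro x hx
      obtain ⟨t, ht, hte⟩ := List.mem_map.1 hx
      exact hte ▸ hDun t ht
    classical
    -- the modified system
    have hwlQ : G.WL (P.a i₀) (A ++ D) v := hA.append hD
    have hmemPA : ∀ x ∈ A.map Prod.fst, x ∈ (P.l i₀).map Prod.fst := by
      intro x hx; rw [heqP, List.map_append]; exact List.mem_append_left _ hx
    have hmemPB : ∀ x ∈ B.map Prod.fst, x ∈ (P.l i₀).map Prod.fst := by
      intro x hx; rw [heqP, List.map_append, List.map_cons]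
      exact List.mem_append_right _ (List.mem_cons_of_mem _ hx)
    have hndQ : ((A ++ D).map Prod.fst).Nodup := by
      rw [List.map_append]
      refine List.Nodup.append ((List.nodup_append.1 ndP).1) ?_ ?_
      · have := (List.nodup_append.1 ndw).2.1
        exact (List.nodup_cons.1 this).2
      · intro x hx hx'
        exact hDunused x hx' ⟨i₀, hmemPA x hx⟩
    set Q : G.Sys S T j :=
      { a := P.a
        b := Function.update P.b i₀ v
        l := Function.update P.l i₀ (A ++ D)
        wl := by
          intro i
          rcases eq_or_ne i i₀ with rfl | hne
          · simpa [Function.update_self] using hwlQ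
          · simpa [Function.update_of_ne hne] using P.wl i
        ha := P.ha
        hb := by
          intro i
          rcases eq_or_ne i i₀ with rfl | hne
          · simpa [Function.update_self] using hv
          · simpa [Function.update_of_ne hne] using P.hb i
        nd := by
          intro i
          rcases eq_or_ne i i₀ with rfl | hne
          · simpa [Function.update_self] using hndQ
          · simpa [Function.update_of_ne hne] using P.nd i
        disj := by
          intro i i' hne x hx hx'
          rcases eq_or_ne i i₀ with rfl | hnei
          · rw [Function.update_self] at hx
            rw [Function.update_of_ne (Ne.symm hne)] at hx'
            rw [List.map_append] at hx
            rcases List.mem_append.1 hx with hxa | hxd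
            · exact P.disj i i' hne x (hmemPA x hxa) hx'
            · exact hDunused x hxd ⟨i', hx'⟩
          · rw [Function.update_of_ne hnei] at hx
            rcases eq_or_ne i' i₀ with rfl | hnei'
            · rw [Function.update_self] at hx'
              rw [List.map_append] at hx'
              rcases List.mem_append.1 hx' with hxa | hxd
              · exact P.disj i i' hne x hx (hmemPA x hxa)
              · exact hDunused x hxd ⟨i, hx⟩
            · rw [Function.update_of_ne hnei'] at hx'
              exact P.disj i i' hne x hx hx' } with hQdef
    have hQl : ∀ i, Q.l i = Function.update P.l i₀ (A ++ D) i := fun i => rfl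
    -- key fact: edges of B are unused in Q
    have hBQ : ∀ x ∈ B.map Prod.fst, ¬ Q.used x := by
      rintro x hx ⟨i, hxi⟩
      rw [hQl] at hxi
      rcases eq_or_ne i i₀ with rfl | hne
      · rw [Function.update_self, List.map_append] at hxi
        rcases List.mem_append.1 hxi with hxa | hxd
        · exact hAB x hxa hx
        · exact hDunused x hxd ⟨i, hmemPB x hx⟩
      · rw [Function.update_of_ne hne] at hxi
        exact P.disj i₀ i (Ne.symm hne) x (hmemPB x hx) hxi
    have hQP : ∀ x, Q.used x → P.used x ∨ x ∈ D.map Prod.fst := by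
      rintro x ⟨i, hxi⟩
      rw [hQl] at hxi
      rcases eq_or_ne i i₀ with rfl | hne
      · rw [Function.update_self, List.map_append] at hxi
        rcases List.mem_append.1 hxi with hxa | hxd
        · exact Or.inl ⟨i, hmemPA x hxa⟩
        · exact Or.inr hxd
      · rw [Function.update_of_ne hne] at hxi
        exact Or.inl ⟨i, hxi⟩
    -- the new residual walk C ++ B
    have hwlW : G.WL a (C ++ B) (P.b i₀) := hC.append hB
    have hresW : Q.Residual (C ++ B) := by
      intro t ht
      rcases List.mem_append.1 ht with htc | htb
      · have htw : t ∈ w := heqw ▸ List.mem_append_left _ htc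
        rcases hres t htw with hun | ⟨i, hrevt⟩
        · left
          intro hq
          rcases hQP t.1 hq with h | h
          · exact hun h
          · exact hCD t.1 (List.mem_map_of_mem htc) h
        · rcases eq_or_ne i i₀ with rfl | hne
          · rw [heqP] at hrevt
            rcases List.mem_append.1 hrevt with hta | htc'
            · right
              refine ⟨i, ?_⟩
              rw [hQl, Function.update_self]
              exact List.mem_append_left _ hta
            · rcases List.mem_cons.1 htc' with hteq | htb'
              · exfalso
                have ht1 : t.1 = e := by
                  have := congrArg Prod.fst hteq; simpa using this
                exact heC (ht1 ▸ List.mem_map_of_mem htc)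
              · left
                exact fun hq => hBQ t.1 (List.mem_map.2 ⟨_, htb', rfl⟩) hq
          · right
            exact ⟨i, by rw [hQl, Function.update_of_ne hne]; exact hrevt⟩
      · left
        exact hBQ t.1 (List.mem_map_of_mem htb)
    -- the measure decreases
    have hcountB : (B.countP (fun s => decide (Q.used s.1))) = 0 := by
      refine List.countP_eq_zero.2 ?_
      intro t ht
      simpa using hBQ t.1 (List.mem_map_of_mem ht)
    have hcountC : (C.countP (fun s => decide (Q.used s.1))) ≤ μ - 1 := by
      have hmono : (C.countP (fun s => decide (Q.used s.1))) ≤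
          (C.countP (fun s => decide (P.used s.1))) := by
        refine List.countP_mono_left ?_
        intro t ht hq
        simp only [decide_eq_true_eq] at hq ⊢
        rcases hQP t.1 hq with h | h
        · exact h
        · exact absurd h (hCD t.1 (List.mem_map_of_mem ht))
      have hcc : (C.countP (fun s => decide (P.used s.1))) = μ - 1 := by
        have hth := hcount
        have hde : decide (P.used (e, sx, sy).1) = true := by simpa using hUs
        rw [heqw, List.countP_append, List.countP_cons] at hth
        have hD0 : (D.countP (fun s => decide (P.used s.1))) = 0 :=
          List.countP_eq_zero.2 (fun t ht => by simpa using hDun t ht)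
        rw [hD0, hde] at hth
        simp only [if_true] at hth
        omega
      omega
    have hcountW : ((C ++ B).countP (fun s => decide (Q.used s.1))) ≤ μ - 1 := by
      rw [List.countP_append, hcountB]
      omega
    -- trim and recurse
    obtain ⟨w'', hsub, hwl'', hnd''⟩ := hwlW.trim
    refine ih (w''.countP (fun s => decide (Q.used s.1))) ?_ Q a (P.b i₀) w''
      hwl'' ha (P.hb i₀) (Q.residual_sublist hsub hresW) hnd'' rfl
    have := hsub.countP_le (p := fun s => decide (Q.used s.1))
    omega

end Augment

section Assemble

variable {S T : Set V}

theorem exists_sys (m : ℕ)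
    (hcut : ∀ X : Set V, S ⊆ X → X ⊆ T → m ≤ (G.edgeCut X).ncard) :
    Nonempty (G.Sys S T m) := by
  induction m with
  | zero =>
    exact ⟨⟨Fin.elim0, Fin.elim0, Fin.elim0, fun i => i.elim0, fun i => i.elim0,
      fun i => i.elim0, fun i => i.elim0, fun i => i.elim0⟩⟩
  | succ m ihm =>
    obtain ⟨P⟩ := ihm fun X h1 h2 => (Nat.le_succ m).trans (hcut X h1 h2)
    by_cases hre : P.Reach ⊆ T
    · have h1 := hcut _ P.subset_reach hre
      have h2 := P.cut_card_le hre
      omega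
    · obtain ⟨v, hvR, hvT⟩ := Set.not_subset.1 hre
      obtain ⟨a, ha, w, hwl, hres⟩ := hvR
      obtain ⟨w', hsub, hwl', hnd'⟩ := hwl.trim
      exact Sys.augment _ P a v w' hwl' ha hvT (P.residual_sublist hsub hres) hnd' rfl

/-- A good family at level `n`: for each cut edge a path starting with that edge,
leaving `S`, of length `> n`, pairwise edge-disjoint. -/
def GoodFam (G : Multigraph V E) (S : Set V) (n : ℕ)
    (F : G.edgeCut S → List (Stp V E)) : Prop :=
  (∀ ec : G.edgeCut S, ∃ x c y rest, x ∈ S ∧ G.WL x (F ec) c ∧ (sup x (F ec)).Nodup ∧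
    n < (F ec).length ∧ F ec = (ec.1, x, y) :: rest) ∧
  (∀ ec ec' : G.edgeCut S, ec ≠ ec' → ∀ x ∈ (F ec).map Prod.fst, x ∉ (F ec').map Prod.fst)

theorem exists_goodFam (hlf : G.LocallyFinite) (hSfin : S.Finite)
    (hmin : ∀ X : Set V, S ⊆ X → X.Finite → (G.edgeCut S).ncard ≤ (G.edgeCut X).ncard)
    (n : ℕ) : ∃ F, G.GoodFam S n F := by
  classical
  set m := (G.edgeCut S).ncard with hm
  set T := G.ball S n with hT
  have hTfin : T.Finite := ball_finite hlf hSfin n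
  obtain ⟨P⟩ := exists_sys (G := G) (S := S) (T := T) m
    (fun X h1 h2 => hmin X h1 (hTfin.subset h2))
  -- process each walk: trim, then take the final segment after the last exit from S
  have hproc : ∀ i : Fin m, ∃ (x : V) (l : List (Stp V E)) (y : V) (rest : List (Stp V E))
      (e : E),
      x ∈ S ∧ G.WL x l (P.b i) ∧ (sup x l).Nodup ∧ n < l.length ∧
      l = (e, x, y) :: rest ∧ e ∈ G.edgeCut S ∧
      List.Sublist (l.map Prod.fst) ((P.l i).map Prod.fst) := by
    intro i
    obtain ⟨w', hsub, hwl', hnd'⟩ := (P.wl i).trim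
    have hbS : P.b i ∉ S := fun hb => P.hb i (subset_ball S n hb)
    obtain ⟨x, hxS, C, l, heq, hC, hl, hlne, hout⟩ := hwl'.last_exit (P.ha i) hbS
    obtain ⟨⟨e, u, y⟩, rest, rfl⟩ := List.exists_cons_of_ne_nil hlne
    have hux : u = x := hl.head_src
    subst hux
    have hinc : G.Inc e u y := by
      cases hl; assumption
    have hyS : y ∉ S := hout (e, u, y) (List.mem_cons_self)
    refine ⟨u, (e, u, y) :: rest, y, rest, e, hxS, hl, ?_, ?_, rfl, ?_, ?_⟩
    · -- nodup support of the suffix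
      have hsuf : sup u ((e, u, y) :: rest) <:+ sup (P.a i) w' := by
        rw [heq]; exact hC.sup_suffix
      exact hnd'.sublist hsuf.sublist
    · -- length
      by_contra hlen
      push_neg at hlen
      exact P.hb i ⟨u, hxS, _, hl, hlen⟩
    · exact (step_cross_iff_mem_edgeCut (s := (e, u, y)) hinc).2 (Or.inl ⟨hxS, hyS⟩)
    · have h1 : List.Sublist ((e, u, y) :: rest) w' := heq ▸ List.sublist_append_right _ _
      exact (h1.map Prod.fst).trans (hsub.map Prod.fst)
  choose xf lf yf restf ef hxS hwlf hndf hlenf heqf hef hsubf using hproc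
  -- first edges are distinct, giving a bijection with the cut
  have hdisj : ∀ i i' : Fin m, i ≠ i' → ∀ z ∈ (lf i).map Prod.fst,
      z ∉ (lf i').map Prod.fst := by
    intro i i' hne z hz hz'
    exact P.disj i i' hne z ((hsubf i).subset hz) ((hsubf i').subset hz')
  have hfe_inj : Function.Injective (fun i => (⟨ef i, hef i⟩ : G.edgeCut S)) := by
    intro i i' hee
    by_contra hne
    have h1 : ef i ∈ (lf i).map Prod.fst := by rw [heqf i]; simp
    have h2 : ef i ∈ (lf i').map Prod.fst := by
      rw [heqf i']
      have : ef i = ef i' := congrArg Subtype.val hee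
      simp [this]
    exact hdisj i i' hne (ef i) h1 h2
  haveI : Finite (G.edgeCut S) := Set.Finite.to_subtype (edgeCut_finite hlf hSfin)
  have hcard : Nat.card (G.edgeCut S) = m := Nat.card_coe_set_eq _
  have hbij : Function.Bijective (fun i => (⟨ef i, hef i⟩ : G.edgeCut S)) := by
    rw [Nat.bijective_iff_injective_and_card]
    exact ⟨hfe_inj, by simp [hcard]⟩
  set eqv := Equiv.ofBijective _ hbij with heqv
  refine ⟨fun ec => lf (eqv.symm ec), ?_, ?_⟩
  · intro ec
    have hfix : ef (eqv.symm ec) = ec.1 := by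
      have := eqv.apply_symm_apply ec
      exact congrArg Subtype.val this
    exact ⟨xf _, P.b _, yf _, restf _, hxS _, hwlf _, hndf _, hlenf _, hfix ▸ heqf _⟩
  · intro ec ec' hne z hz
    exact hdisj _ _ (fun h => hne (by rw [← eqv.apply_symm_apply ec, ← eqv.apply_symm_apply ec', h]))
      z hz

end Assemble

section Limit

theorem ultra_limit {α : Type*} (U : Ultrafilter ℕ) (f : ℕ → α) {s : Set α} (hs : s.Finite)
    (h : {n | f n ∈ s} ∈ U) : ∃ a, {n | f n = a} ∈ U := by
  revert h
  refine Set.Finite.induction_on (motive := fun s _ => {n | f n ∈ s} ∈ U → ∃ a, {n | f n = a} ∈ U)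
    s hs ?_ ?_
  · intro h
    exfalso
    obtain ⟨n, hn⟩ := Filter.nonempty_of_mem h
    simp at hn
  · intro a s ha hsf ih h
    have hcup : {n | f n = a} ∪ {n | f n ∈ s} ∈ U := by
      refine Filter.mem_of_superset h ?_
      intro n hn
      rcases hn with h1 | h2
      · exact Or.inl h1
      · exact Or.inr h2
    rcases Ultrafilter.union_mem_iff.1 hcup with h1 | h2
    · exact ⟨a, h1⟩
    · exact ih h2

variable {S : Set V}

theorem exists_rays (hlf : G.LocallyFinite) (hSfin : S.Finite)
    (hmin : ∀ X : Set V, S ⊆ X → X.Finite → (G.edgeCut S).ncard ≤ (G.edgeCut X).ncard) :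
    ∃ ray : G.edgeCut S → G.Ray,
      (∀ ec : G.edgeCut S, (ray ec).edge 0 = ec.1) ∧
      (∀ ec ec' : G.edgeCut S, ec ≠ ec' → (ray ec).EdgeDisjoint (ray ec')) := by
  classical
  choose Fam hFam using fun n => exists_goodFam hlf hSfin hmin n
  set U : Ultrafilter ℕ := Ultrafilter.of Filter.atTop with hUdef
  have hU : ∀ L : ℕ, {n | L ≤ n} ∈ U := fun L =>
    (Ultrafilter.of_le Filter.atTop) (Filter.mem_atTop L)
  have hglim : ∀ (ec : G.edgeCut S) (L : ℕ), ∃ p, {n | (Fam n ec).take L = p} ∈ U := by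
    intro ec L
    refine ultra_limit U _ (steps_finite hlf L S hSfin) ?_
    refine Filter.mem_of_superset (hU L) ?_
    intro n hn
    obtain ⟨x, c, y, rest, hxS, hwl, hnd, hlen, heq⟩ := (hFam n).1 ec
    refine ⟨?_, ?_⟩
    · simpa using List.length_take_le L _
    · obtain ⟨c', hc'⟩ := hwl.prefix_exists (List.take_prefix L _)
      exact ⟨x, hxS, c', hc'⟩
  choose g hg using hglim
  have hpick : ∀ (s₁ s₂ s₃ : Set ℕ), s₁ ∈ U → s₂ ∈ U → s₃ ∈ U →
      ∃ n, n ∈ s₁ ∧ n ∈ s₂ ∧ n ∈ s₃ := by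
    intro s₁ s₂ s₃ h1 h2 h3
    obtain ⟨n, hn⟩ := Filter.nonempty_of_mem (Filter.inter_mem (Filter.inter_mem h1 h2) h3)
    exact ⟨n, hn.1.1, hn.1.2, hn.2⟩
  -- length of the limit prefixes
  have hlen : ∀ (ec : G.edgeCut S) (L : ℕ), (g ec L).length = L := by
    intro ec L
    obtain ⟨n, hn1, hn2, -⟩ := hpick _ _ _ (hg ec L) (hU L) (hU L)
    obtain ⟨x, c, y, rest, hxS, hwl, hnd, hlenf, heq⟩ := (hFam n).1 ec
    rw [← hn1, List.length_take]
    exact min_eq_left (le_of_lt (lt_of_le_of_lt hn2 hlenf))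
  -- compatibility
  have hcompat : ∀ (ec : G.edgeCut S) (L L' : ℕ), L ≤ L' → g ec L = (g ec L').take L := by
    intro ec L L' hLL
    obtain ⟨n, hn1, hn2, -⟩ := hpick _ _ _ (hg ec L) (hg ec L') (hU 0)
    rw [← hn1, ← hn2, List.take_take, min_eq_left hLL]
  -- validity of the limit prefixes
  have hvalid : ∀ (ec : G.edgeCut S) (L : ℕ), ∃ x c, x ∈ S ∧ G.WL x (g ec L) c ∧
      (sup x (g ec L)).Nodup ∧ (0 < L → ∃ y rest, g ec L = (ec.1, x, y) :: rest) := by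
    intro ec L
    obtain ⟨n, hn1, -, -⟩ := hpick _ _ _ (hg ec L) (hU 0) (hU 0)
    obtain ⟨x, c, y, rest, hxS, hwl, hnd, hlenf, heq⟩ := (hFam n).1 ec
    obtain ⟨c', hc'⟩ := hwl.prefix_exists (List.take_prefix L _)
    refine ⟨x, c', hxS, hn1 ▸ hc', ?_, ?_⟩
    · rw [← hn1]
      have hsupeq : sup x ((Fam n ec).take L) = (sup x (Fam n ec)).take (L + 1) := by
        simp [sup, List.map_take]
      rw [hsupeq]
      exact hnd.sublist (List.take_sublist _ _)
    · intro hL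
      refine ⟨y, rest.take (L - 1), ?_⟩
      rw [← hn1, heq]
      match L, hL with
      | (L' + 1), _ => simp [List.take_succ_cons]
  -- pairwise disjointness of the limit prefixes
  have hdisjL : ∀ (ec ec' : G.edgeCut S), ec ≠ ec' → ∀ L,
      ∀ z ∈ (g ec L).map Prod.fst, z ∉ (g ec' L).map Prod.fst := by
    intro ec ec' hne L z hz hz'
    obtain ⟨n, hn1, hn2, -⟩ := hpick _ _ _ (hg ec L) (hg ec' L) (hU 0)
    rw [← hn1] at hz
    rw [← hn2] at hz'
    exact (hFam n).2 ec ec' hne z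
      (((List.take_sublist _ _).map Prod.fst).subset hz)
      (((List.take_sublist _ _).map Prod.fst).subset hz')
  -- the steps of the limit rays
  set stp : G.edgeCut S → ℕ → Stp V E :=
    fun ec i => (g ec (i + 1)).getD i (ec.1, G.fst ec.1, G.fst ec.1) with hstpdef
  have hstp : ∀ (ec : G.edgeCut S) (L i : ℕ) (h : i < L),
      stp ec i = (g ec L)[i]'(by rw [hlen]; exact h) := by
    intro ec L i h
    rw [hstpdef]
    simp only
    rw [hcompat ec (i + 1) L h]
    rw [List.getD_eq_getElem _ _ (by rw [List.length_take, hlen]; omega)]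
    exact List.getElem_take
  have hstpmem : ∀ (ec : G.edgeCut S) (L i : ℕ) (h : i < L), stp ec i ∈ g ec L := by
    intro ec L i h
    rw [hstp ec L i h]
    exact List.getElem_mem _
  -- construct the rays
  have hrays : ∀ ec : G.edgeCut S, ∃ R : G.Ray,
      (∀ i, R.edge i = (stp ec i).1) ∧ R.edge 0 = ec.1 := by
    intro ec
    have hvert : ∀ i, (stp ec (i + 1)).2.1 = (stp ec i).2.2 := by
      intro i
      obtain ⟨x, c, hxS, hwl, hnd, -⟩ := hvalid ec (i + 2)
      rw [hstp ec (i + 2) (i + 1) (by omega), hstp ec (i + 2) i (by omega)]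
      exact hwl.chain i (by rw [hlen]; omega)
    have hinc : ∀ i, G.Inc (stp ec i).1 (stp ec i).2.1 (stp ec i).2.2 := by
      intro i
      obtain ⟨x, c, hxS, hwl, hnd, -⟩ := hvalid ec (i + 1)
      exact hwl.inc_of_mem (hstpmem ec (i + 1) i (by omega))
    have hinj : Function.Injective (fun i => (stp ec i).2.1) := by
      intro p q hpq
      by_contra hne
      set L := max p q + 1 with hL
      obtain ⟨x, c, hxS, hwl, hnd, -⟩ := hvalid ec L
      have hsrc := hwl.srcs_nodup hnd
      have hp : p < ((g ec L).map (fun s => s.2.1)).length := by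
        rw [List.length_map, hlen]; omega
      have hq : q < ((g ec L).map (fun s => s.2.1)).length := by
        rw [List.length_map, hlen]; omega
      have hgp : ((g ec L).map (fun s => s.2.1))[p]'hp = (stp ec p).2.1 := by
        rw [List.getElem_map, hstp ec L p (by omega)]
      have hgq : ((g ec L).map (fun s => s.2.1))[q]'hq = (stp ec q).2.1 := by
        rw [List.getElem_map, hstp ec L q (by omega)]
      have hpq' : (stp ec p).2.1 = (stp ec q).2.1 := hpq
      rw [← hgp, ← hgq] at hpq'
      exact hne (hsrc.getElem_inj_iff.1 hpq')
    refine ⟨⟨fun i => (stp ec i).2.1, fun i => (stp ec i).1, ?_, hinj⟩, fun i => rfl, ?_⟩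
    · intro n
      show G.Inc (stp ec n).1 (stp ec n).2.1 (stp ec (n + 1)).2.1
      rw [hvert n]
      exact hinc n
    · show (stp ec 0).1 = ec.1
      obtain ⟨x, c, hxS, hwl, hnd, hhead⟩ := hvalid ec 1
      obtain ⟨y, rest, heq⟩ := hhead (by omega)
      rw [hstp ec 1 0 (by omega)]
      have : (g ec 1)[0]'(by rw [hlen]; omega) = (ec.1, x, y) := by
        simp [heq]
      rw [this]
  choose ray hray0 hray1 using hrays
  refine ⟨ray, hray1, ?_⟩
  intro ec ec' hne p q
  rw [hray0 ec p, hray0 ec' q]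
  intro heq
  set L := max p q + 1 with hL
  have h1 : (stp ec p).1 ∈ (g ec L).map Prod.fst :=
    List.mem_map_of_mem (hstpmem ec L p (by omega))
  have h2 : (stp ec' q).1 ∈ (g ec' L).map Prod.fst :=
    List.mem_map_of_mem (hstpmem ec' L q (by omega))
  exact hdisjL ec ec' hne L _ h1 (heq ▸ h2)

end Limit

section Final

theorem Walk.toWL {x y : V} (p : G.Walk x y) : ∃ l, G.WL x l y := by
  induction p with
  | nil x => exact ⟨[], WL.nil x⟩
  | cons e h p ih =>
    obtain ⟨l, hl⟩ := ih
    exact ⟨_ :: l, WL.cons h hl⟩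

theorem main_aux (G : Multigraph V E) (k : ℕ)
    (hk : 0 < k) (hinf : Infinite V) (hlf : G.LocallyFinite)
    (hconn : G.EdgeConnected k) (A : Set V) (hA : A.Finite) :
    ∃ S : Set V, A ⊆ S ∧ S.Finite ∧
      ∃ R : E → G.Ray,
        (∀ e ∈ G.edgeCut S, (R e).edge 0 = e) ∧
        (∀ e ∈ G.edgeCut S, ∀ f ∈ G.edgeCut S, e ≠ f → (R e).EdgeDisjoint (R f)) ∧
        (G.OneEnded → ∀ e ∈ G.edgeCut S, ∀ Q : G.Ray, G.RayEquiv (R e) Q) := by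
  classical
  haveI := hinf
  obtain ⟨x₀⟩ : Nonempty V := inferInstance
  set A' := insert x₀ A with hA'def
  have hA'fin : A'.Finite := hA.insert x₀
  set cand := {n : ℕ | ∃ X : Set V, A' ⊆ X ∧ X.Finite ∧ (G.edgeCut X).ncard = n} with hcand
  have hcne : cand.Nonempty := ⟨(G.edgeCut A').ncard, A', subset_rfl, hA'fin, rfl⟩
  obtain ⟨S, hAS, hSfin, hmS⟩ := Nat.sInf_mem hcne
  have hmin : ∀ X : Set V, S ⊆ X → X.Finite →
      (G.edgeCut S).ncard ≤ (G.edgeCut X).ncard := by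
    intro X hSX hXfin
    rw [hmS]
    exact Nat.sInf_le ⟨X, hAS.trans hSX, hXfin, rfl⟩
  obtain ⟨ray, hray0, hray1⟩ := exists_rays hlf hSfin hmin
  have hcutne : (G.edgeCut S).Nonempty := by
    obtain ⟨y, hy⟩ := (hSfin.infinite_compl).nonempty
    have hx0S : x₀ ∈ S := hAS (Set.mem_insert _ _)
    have hxy : x₀ ≠ y := fun h => hy (h ▸ hx0S)
    obtain ⟨P, -, -⟩ := hconn x₀ y hxy
    obtain ⟨l, hl⟩ := (P ⟨0, hk⟩).toWL
    obtain ⟨s, hs, hcr⟩ := hl.exists_crossing hx0S hy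
    exact ⟨s.1, (step_cross_iff_mem_edgeCut (hl.inc_of_mem hs)).2 (Or.inl hcr)⟩
  obtain ⟨e₀, he₀⟩ := hcutne
  refine ⟨S, (Set.subset_insert x₀ A).trans hAS, hSfin,
    fun e => if h : e ∈ G.edgeCut S then ray ⟨e, h⟩ else ray ⟨e₀, he₀⟩, ?_, ?_, ?_⟩
  · intro e he
    simp only [dif_pos he]
    exact hray0 ⟨e, he⟩
  · intro e he f hf hef
    simp only [dif_pos he, dif_pos hf]
    exact hray1 _ _ (fun h => hef (congrArg Subtype.val h))
  · intro h1 e he Q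
    exact h1.2 _ Q

end Final

end Multigraph


/-- Let `k` be a positive integer, `G` an infinite, locally finite,
`k`-edge-connected graph and `A` a finite set of vertices. Then there is a finite set
`S ⊇ A` of vertices and a collection of pairwise edge-disjoint rays, one for each edge of
`δ(S)`, such that each edge of `δ(S)` is the first edge of the corresponding ray.
Moreover, if `G` is 1-ended, all these rays belong to the unique end of `G`. -/
theorem exists_cut_with_rays {V : Type u} {E : Type v} (G : Multigraph V E) (k : ℕ)
    (hk : 0 < k) (hinf : Infinite V) (hlf : G.LocallyFinite)
    (hconn : G.EdgeConnected k) (A : Set V) (hA : A.Finite) :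
    ∃ S : Set V, A ⊆ S ∧ S.Finite ∧
      ∃ R : E → G.Ray,
        (∀ e ∈ G.edgeCut S, (R e).edge 0 = e) ∧
        (∀ e ∈ G.edgeCut S, ∀ f ∈ G.edgeCut S, e ≠ f → (R e).EdgeDisjoint (R f)) ∧
        (G.OneEnded → ∀ e ∈ G.edgeCut S, ∀ Q : G.Ray, G.RayEquiv (R e) Q) :=
  G.main_aux k hk hinf hlf hconn A hA
end
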